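/- Let R = 1, 0 < β < π, and θ ∈ (β/2, π/2) with cos θ - tan(β/2) cos(π/2 - θ) ≥ 0, and 0 < α < π. Then the half longitude-width of the viewport Δ/2 = π/2 - arctan((cos θ - tan(β/2) sin θ)/tan(α/2)) lies in the interval (0, π/2], and Δ/2 is an increasing function of the latitude θ. -/
import Mathlib


open Real

theorem viewport_halfwidth_range_and_mono (α β : ℝ)
    (hα : 0 < α) (hα' : α < π) (hβ : 0 < β) (hβ' : β < π)
    (Δhalf : ℝ → ℝ)
    (hΔ : ∀ θ, Δhalf θ = π / 2 -
      Real.arctan ((Real.cos θ - Real.tan (β / 2) * Real.sin θ) / Real.tan (α / 2))) :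
    (∀ θ ∈ Set.Ioo (β / 2) (π / 2),
        0 ≤ Real.cos θ - Real.tan (β / 2) * Real.sin θ →
          Δhalf θ ∈ Set.Ioc 0 (π / 2)) ∧
    StrictMonoOn Δhalf
      {θ | θ ∈ Set.Ioo (β / 2) (π / 2) ∧
        0 ≤ Real.cos θ - Real.tan (β / 2) * Real.sin θ} := by
  have htα : 0 < Real.tan (α / 2) :=
    Real.tan_pos_of_pos_of_lt_pi_div_two (by linarith) (by linarith)
  have htβ : 0 < Real.tan (β / 2) :=
    Real.tan_pos_of_pos_of_lt_pi_div_two (by linarith) (by linarith)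
  constructor
  · intro θ hθ hnum
    rw [hΔ θ]
    constructor
    · have := Real.arctan_lt_pi_div_two
        ((Real.cos θ - Real.tan (β / 2) * Real.sin θ) / Real.tan (α / 2))
      linarith
    · have : 0 ≤ Real.arctan
        ((Real.cos θ - Real.tan (β / 2) * Real.sin θ) / Real.tan (α / 2)) :=
        Real.arctan_zero ▸ Real.arctan_strictMono.monotone (div_nonneg hnum htα.le)
      linarith
  · intro a ha b hb hab
    obtain ⟨⟨ha1, ha2⟩, -⟩ := ha
    obtain ⟨⟨hb1, hb2⟩, -⟩ := hb
    have hβ2 : 0 < β / 2 := by linarith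
    have hcos : Real.cos b < Real.cos a := by
      apply Real.strictAntiOn_cos ⟨by linarith, by linarith [Real.pi_pos]⟩
        ⟨by linarith, by linarith [Real.pi_pos]⟩ hab
    have hsin : Real.sin a < Real.sin b := by
      apply Real.strictMonoOn_sin ⟨by linarith [Real.pi_pos], by linarith⟩
        ⟨by linarith [Real.pi_pos], by linarith⟩ hab
    have hnum : Real.cos b - Real.tan (β / 2) * Real.sin b <
        Real.cos a - Real.tan (β / 2) * Real.sin a := by
      have := mul_lt_mul_of_pos_left hsin htβ
      linarith
    have hdiv : (Real.cos b - Real.tan (β / 2) * Real.sin b) / Real.tan (α / 2) <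
        (Real.cos a - Real.tan (β / 2) * Real.sin a) / Real.tan (α / 2) :=
      by gcongr
    have := Real.arctan_strictMono hdiv
    rw [hΔ a, hΔ b]
    linarith
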